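/- arXiv:1512.02623 — 4 statements merged into one kernel-verified Lean document; each statement's English description precedes it below -/
import Mathlib

section
/- Let X be a complex Banach space and T a bounded linear operator on X. Then T is left generalized Drazin invertible if and only if T admits a generalized Kato decomposition GKD(M,N) and the quasinilpotent part H₀(T) is closed. -/
open Filter Topology Set

namespace Paper

variable {Y : Type*} [NormedAddCommGroup Y] [NormedSpace ℂ Y]

/-- A bounded operator `A` is quasinilpotent if `‖Aⁿ‖^(1/n) → 0`. -/
def IsQuasinilpotent (A : Y →L[ℂ] Y) : Prop :=
  Tendsto (fun n : ℕ => ‖A ^ n‖ ^ (1 / (n : ℝ))) atTop (nhds (0 : ℝ))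

/-- `A` is semi-regular if its range is closed and `ker (Aⁿ) ⊆ ran A` for all `n`. -/
def SemiRegular (A : Y →L[ℂ] Y) : Prop :=
  IsClosed (Set.range A) ∧ ∀ n : ℕ, ∀ x : Y, (A ^ n) x = 0 → x ∈ Set.range A

/-- `A` has the single-valued extension property at `l0`. -/
def HasSVEPAt (A : Y →L[ℂ] Y) (l0 : ℂ) : Prop :=
  ∀ U : Set ℂ, IsOpen U → l0 ∈ U → ∀ f : ℂ → Y, AnalyticOnNhd ℂ f U →
    (∀ l ∈ U, l • f l - A (f l) = 0) → ∀ l ∈ U, f l = 0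

/-- `A` has the single-valued extension property (at every point). -/
def HasSVEP (A : Y →L[ℂ] Y) : Prop := ∀ l : ℂ, HasSVEPAt A l

/-- `A` is bounded below: injective with closed range. -/
def BoundedBelow (A : Y →L[ℂ] Y) : Prop :=
  Function.Injective A ∧ IsClosed (Set.range A)

variable {X : Type*} [NormedAddCommGroup X] [NormedSpace ℂ X] [CompleteSpace X]

/-- The quasinilpotent part `H₀(T)` of `T`. -/
def quasinilpotentPart (T : X →L[ℂ] X) : Set X :=
  {x : X | Tendsto (fun n : ℕ => ‖(T ^ n) x‖ ^ (1 / (n : ℝ))) atTop (nhds (0 : ℝ))}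

/-- The analytic core `K(T)` of `T`. -/
def analyticCore (T : X →L[ℂ] X) : Set X :=
  {x : X | ∃ (u : ℕ → X) (δ : ℝ), 0 < δ ∧ T (u 1) = x ∧
    (∀ n : ℕ, 1 ≤ n → T (u (n + 1)) = u n) ∧ (∀ n : ℕ, 1 ≤ n → ‖u n‖ ≤ δ ^ n * ‖x‖)}

/-- Restriction of `T` to an invariant subspace `M`, as a continuous linear operator on `M`. -/
def restrictCLM (T : X →L[ℂ] X) (M : Submodule ℂ X) (h : ∀ x ∈ M, T x ∈ M) : M →L[ℂ] M :=
  { toLinearMap := (T : X →ₗ[ℂ] X).restrict h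
    cont := (T.continuous.comp continuous_subtype_val).subtype_mk _ }

/-- `(M, N)` is a generalized Kato decomposition of `T`. -/
structure IsGKD (T : X →L[ℂ] X) (M N : Submodule ℂ X) : Prop where
  closedM : IsClosed (M : Set X)
  closedN : IsClosed (N : Set X)
  invM : ∀ x ∈ M, T x ∈ M
  invN : ∀ x ∈ N, T x ∈ N
  compl : IsCompl M N
  semiregM : SemiRegular (restrictCLM T M invM)
  quasiN : IsQuasinilpotent (restrictCLM T N invN)

/-- `T` admits a generalized Kato decomposition. -/
def HasGKD (T : X →L[ℂ] X) : Prop := ∃ M N : Submodule ℂ X, IsGKD T M N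

/-- `T` is left generalized Drazin invertible. -/
def LeftGDInvertible (T : X →L[ℂ] X) : Prop :=
  IsClosed (quasinilpotentPart T) ∧
  ∃ M : Submodule ℂ X, IsClosed (M : Set X) ∧ (∀ x ∈ M, T x ∈ M) ∧
    IsClosed (T '' (M : Set X)) ∧
    (M : Set X) ∩ quasinilpotentPart T = {0} ∧
    (∀ x : X, ∃ m ∈ M, ∃ h ∈ quasinilpotentPart T, x = m + h)

/-- `T` is right generalized Drazin invertible. -/
def RightGDInvertible (T : X →L[ℂ] X) : Prop :=
  IsClosed (analyticCore T) ∧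
  ∃ N : Submodule ℂ X, IsClosed (N : Set X) ∧ (∀ x ∈ N, T x ∈ N) ∧
    (N : Set X) ⊆ quasinilpotentPart T ∧
    analyticCore T ∩ (N : Set X) = {0} ∧
    (∀ x : X, ∃ k ∈ analyticCore T, ∃ h ∈ N, x = k + h)

/-- The approximate point spectrum. -/
def sigmaAp (T : X →L[ℂ] X) : Set ℂ :=
  {l : ℂ | ¬ BoundedBelow (l • ContinuousLinearMap.id ℂ X - T)}

/-- The surjective spectrum. -/
def sigmaSu (T : X →L[ℂ] X) : Set ℂ :=
  {l : ℂ | ¬ Function.Surjective (l • ContinuousLinearMap.id ℂ X - T)}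

/-- The left generalized Drazin spectrum. -/
def sigmaLgD (T : X →L[ℂ] X) : Set ℂ :=
  {l : ℂ | ¬ LeftGDInvertible (l • ContinuousLinearMap.id ℂ X - T)}

/-- The right generalized Drazin spectrum. -/
def sigmaRgD (T : X →L[ℂ] X) : Set ℂ :=
  {l : ℂ | ¬ RightGDInvertible (l • ContinuousLinearMap.id ℂ X - T)}

/-- The generalized Kato spectrum. -/
def sigmaGK (T : X →L[ℂ] X) : Set ℂ :=
  {l : ℂ | ¬ HasGKD (l • ContinuousLinearMap.id ℂ X - T)}

/-- The set of points where `T` fails to have the SVEP. -/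
def svepFailSet (T : X →L[ℂ] X) : Set ℂ := {l : ℂ | ¬ HasSVEPAt T l}

/-- The adjoint `T*` of `T`, acting on the dual space, `(T* φ) x = φ (T x)`. -/
noncomputable def adjointDual (T : X →L[ℂ] X) :
    StrongDual ℂ X →L[ℂ] StrongDual ℂ X :=
  (ContinuousLinearMap.compL ℂ X X ℂ).flip T

/-- The local resolvent set of `T` at `x`. -/
def localResolvent (T : X →L[ℂ] X) (x : X) : Set ℂ :=
  ⋃₀ {U : Set ℂ | IsOpen U ∧ ∃ f : ℂ → X, AnalyticOnNhd ℂ f U ∧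
      ∀ l ∈ U, l • f l - T (f l) = x}

/-- The local spectrum of `T` at `x`. -/
def localSpectrum (T : X →L[ℂ] X) (x : X) : Set ℂ := (localResolvent T x)ᶜ

/-- The local spectral subspace `X_T(Ω)`. -/
def localSpectralSubspace (T : X →L[ℂ] X) (Ω : Set ℂ) : Set X :=
  {x : X | localSpectrum T x ⊆ Ω}

/-- Dunford's property `(C)`. -/
def HasPropertyC (T : X →L[ℂ] X) : Prop :=
  ∀ Ω : Set ℂ, IsClosed Ω → IsClosed (localSpectralSubspace T Ω)

/-- Bishop's property `(β)`. -/
def HasPropertyBeta (T : X →L[ℂ] X) : Prop :=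
  ∀ U : Set ℂ, IsOpen U → ∀ f : ℕ → ℂ → X, (∀ n, AnalyticOnNhd ℂ (f n) U) →
    (∀ K : Set ℂ, K ⊆ U → IsCompact K →
      TendstoUniformlyOn (fun n l => l • f n l - T (f n l)) (fun _ => 0) atTop K) →
    ∀ K : Set ℂ, K ⊆ U → IsCompact K →
      TendstoUniformlyOn (fun n l => f n l) (fun _ => 0) atTop K

/-- `S` is a generalized Drazin inverse of `T`. -/
def IsGDInverse (T S : X →L[ℂ] X) : Prop :=
  S * T = T * S ∧ S * T * S = S ∧ IsQuasinilpotent (T * S * T - T)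


lemma aux_exists_bound (a : ℕ → ℝ) (ha : ∀ n, 0 ≤ a n) {ε : ℝ} (hε : 0 < ε) (N : ℕ)
    (h : ∀ n, N ≤ n → a n ≤ ε ^ n) : ∃ C, 0 < C ∧ ∀ n, a n ≤ C * ε ^ n := by
  have hsum : 0 ≤ ∑ k ∈ Finset.range N, a k / ε ^ k :=
    Finset.sum_nonneg fun k _ => div_nonneg (ha k) (le_of_lt (pow_pos hε k))
  refine ⟨1 + ∑ k ∈ Finset.range N, a k / ε ^ k, by linarith, fun n => ?_⟩
  rcases le_or_gt N n with hn | hn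
  · calc a n ≤ ε ^ n := h n hn
    _ ≤ (1 + ∑ k ∈ Finset.range N, a k / ε ^ k) * ε ^ n := by
        nlinarith [pow_pos hε n, Finset.sum_nonneg (fun k (_ : k ∈ Finset.range N) => div_nonneg (ha k) (le_of_lt (pow_pos hε k)))]
  · have h1 : a n / ε ^ n ≤ ∑ k ∈ Finset.range N, a k / ε ^ k :=
      Finset.single_le_sum (f := fun k => a k / ε ^ k)
        (fun k _ => div_nonneg (ha k) (le_of_lt (pow_pos hε k))) (Finset.mem_range.2 hn)
    have h2 : a n = (a n / ε ^ n) * ε ^ n := by field_simp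
    rw [h2]
    have := pow_pos hε n
    nlinarith

lemma aux_tendsto_rpow_const (C : ℝ) (hC : 0 < C) :
    Tendsto (fun n : ℕ => C ^ (1 / (n : ℝ))) atTop (𝓝 1) := by
  have h1 : Tendsto (fun n : ℕ => Real.log C * (1 / (n : ℝ))) atTop (𝓝 0) := by
    simpa using tendsto_one_div_atTop_nhds_zero_nat.const_mul (Real.log C)
  have h2 : Tendsto (fun n : ℕ => Real.exp (Real.log C * (1 / (n : ℝ)))) atTop (𝓝 1) := by
    simpa [Function.comp_def] using (Real.continuous_exp.tendsto 0).comp h1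
  refine h2.congr fun n => ?_
  rw [Real.rpow_def_of_pos hC]

lemma tendsto_rpow_div_iff (a : ℕ → ℝ) (ha : ∀ n, 0 ≤ a n) :
    Tendsto (fun n : ℕ => a n ^ (1 / (n : ℝ))) atTop (𝓝 0) ↔
      ∀ ε : ℝ, 0 < ε → ∃ C, 0 < C ∧ ∀ n, a n ≤ C * ε ^ n := by
  constructor
  · intro ht ε hε
    have hev : ∀ᶠ n : ℕ in atTop, a n ^ (1 / (n : ℝ)) < ε := by
      have := ht (Iio_mem_nhds hε)
      simpa using this
    rcases (hev.and (eventually_ge_atTop 1)).exists_forall_of_atTop with ⟨N, hN⟩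
    refine aux_exists_bound a ha hε N fun n hn => ?_
    obtain ⟨h1, h2⟩ := hN n hn
    have hn0 : (n : ℝ) ≠ 0 := Nat.cast_ne_zero.2 (by omega)
    have key : a n = (a n ^ (1 / (n : ℝ))) ^ n := by
      rw [← Real.rpow_natCast (a n ^ (1 / (n : ℝ))) n, ← Real.rpow_mul (ha n)]
      rw [one_div, inv_mul_cancel₀ hn0, Real.rpow_one]
    rw [key]
    exact pow_le_pow_left₀ (Real.rpow_nonneg (ha n) _) h1.le n
  · intro h
    rw [NormedAddCommGroup.tendsto_nhds_zero]
    intro ε hε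
    obtain ⟨C, hC, hb⟩ := h (ε / 2) (by positivity)
    have hev1 : ∀ᶠ n : ℕ in atTop, C ^ (1 / (n : ℝ)) < 3 / 2 := by
      have := (aux_tendsto_rpow_const C hC) (Iio_mem_nhds (by norm_num : (1:ℝ) < 3/2))
      simpa using this
    filter_upwards [hev1, eventually_ge_atTop 1] with n h1 h2
    have hn0 : (n : ℝ) ≠ 0 := Nat.cast_ne_zero.2 (by omega)
    have hr : a n ^ (1 / (n : ℝ)) ≤ (C * (ε / 2) ^ n) ^ (1 / (n : ℝ)) :=
      Real.rpow_le_rpow (ha n) (hb n) (by positivity)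
    have heq : (C * (ε / 2) ^ n) ^ (1 / (n : ℝ)) = C ^ (1 / (n : ℝ)) * (ε / 2) := by
      rw [Real.mul_rpow hC.le (by positivity), ← Real.rpow_natCast (ε/2) n,
        ← Real.rpow_mul (by positivity)]
      rw [mul_one_div, div_self hn0, Real.rpow_one]
    rw [Real.norm_of_nonneg (Real.rpow_nonneg (ha n) _)]
    calc a n ^ (1 / (n : ℝ)) ≤ C ^ (1 / (n : ℝ)) * (ε / 2) := heq ▸ hr
    _ < (3 / 2) * (ε / 2) := by
        have : (0:ℝ) < ε / 2 := by positivity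
        exact mul_lt_mul_of_pos_right h1 this
    _ < ε := by linarith

lemma mem_qnp_iff (T : X →L[ℂ] X) (x : X) :
    x ∈ quasinilpotentPart T ↔
      ∀ ε : ℝ, 0 < ε → ∃ C, 0 < C ∧ ∀ n, ‖(T ^ n) x‖ ≤ C * ε ^ n :=
  tendsto_rpow_div_iff _ (fun n => norm_nonneg _)

lemma isQuasinilpotent_iff (A : Y →L[ℂ] Y) :
    IsQuasinilpotent A ↔ ∀ ε : ℝ, 0 < ε → ∃ C, 0 < C ∧ ∀ n, ‖A ^ n‖ ≤ C * ε ^ n :=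
  tendsto_rpow_div_iff _ (fun n => norm_nonneg _)

lemma zero_mem_qnp (T : X →L[ℂ] X) : (0 : X) ∈ quasinilpotentPart T := by
  rw [mem_qnp_iff]
  intro ε hε
  exact ⟨1, one_pos, fun n => by simp [le_of_lt (pow_pos hε n)]⟩

lemma add_mem_qnp (T : X →L[ℂ] X) {x y : X} (hx : x ∈ quasinilpotentPart T)
    (hy : y ∈ quasinilpotentPart T) : x + y ∈ quasinilpotentPart T := by
  rw [mem_qnp_iff] at *
  intro ε hε
  obtain ⟨C₁, hC₁, h₁⟩ := hx ε hε
  obtain ⟨C₂, hC₂, h₂⟩ := hy ε hε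
  refine ⟨C₁ + C₂, by linarith, fun n => ?_⟩
  calc ‖(T ^ n) (x + y)‖ ≤ ‖(T ^ n) x‖ + ‖(T ^ n) y‖ := by
        rw [map_add]; exact norm_add_le _ _
  _ ≤ C₁ * ε ^ n + C₂ * ε ^ n := add_le_add (h₁ n) (h₂ n)
  _ = (C₁ + C₂) * ε ^ n := by ring

lemma smul_mem_qnp (T : X →L[ℂ] X) (c : ℂ) {x : X} (hx : x ∈ quasinilpotentPart T) :
    c • x ∈ quasinilpotentPart T := by
  rw [mem_qnp_iff] at *
  intro ε hε
  obtain ⟨C, hC, h⟩ := hx ε hε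
  refine ⟨(‖c‖ + 1) * C, by positivity, fun n => ?_⟩
  calc ‖(T ^ n) (c • x)‖ = ‖c‖ * ‖(T ^ n) x‖ := by rw [map_smul, norm_smul]
  _ ≤ (‖c‖ + 1) * (C * ε ^ n) := by
      have := h n
      have h0 : (0:ℝ) ≤ ‖c‖ := norm_nonneg _
      nlinarith [norm_nonneg ((T ^ n) x), mul_pos hC (pow_pos hε n)]
  _ = (‖c‖ + 1) * C * ε ^ n := by ring

/-- `H₀(T)` as a submodule. -/
def qnpSub (T : X →L[ℂ] X) : Submodule ℂ X where
  carrier := quasinilpotentPart T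
  zero_mem' := zero_mem_qnp T
  add_mem' := add_mem_qnp T
  smul_mem' := fun c _ hx => smul_mem_qnp T c hx

@[simp] lemma qnpSub_coe (T : X →L[ℂ] X) : (qnpSub T : Set X) = quasinilpotentPart T := rfl

lemma qnp_inv (T : X →L[ℂ] X) {x : X} (hx : x ∈ quasinilpotentPart T) :
    T x ∈ quasinilpotentPart T := by
  rw [mem_qnp_iff] at *
  intro ε hε
  obtain ⟨C, hC, h⟩ := hx ε hε
  refine ⟨C * ε, by positivity, fun n => ?_⟩
  have : (T ^ n) (T x) = (T ^ (n + 1)) x := by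
    rw [pow_succ, ContinuousLinearMap.mul_apply]
  rw [this]
  calc ‖(T ^ (n+1)) x‖ ≤ C * ε ^ (n+1) := h (n+1)
  _ = C * ε * ε ^ n := by ring

lemma mem_qnp_of_pow_eq_zero (T : X →L[ℂ] X) {x : X} {m : ℕ} (h : (T ^ m) x = 0) :
    x ∈ quasinilpotentPart T := by
  rw [mem_qnp_iff]
  intro ε hε
  refine aux_exists_bound _ (fun n => norm_nonneg _) hε m fun n hn => ?_
  have : (T ^ n) x = 0 := by
    have : T ^ n = T ^ (n - m) * T ^ m := by
      rw [← pow_add]; congr 1; omega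
    rw [this, ContinuousLinearMap.mul_apply, h, map_zero]
  simp [this, le_of_lt (pow_pos hε n)]

lemma restrict_pow (T : X →L[ℂ] X) (M : Submodule ℂ X) (h : ∀ x ∈ M, T x ∈ M)
    (n : ℕ) (x : M) : (((restrictCLM T M h) ^ n) x : X) = (T ^ n) (x : X) := by
  induction n generalizing x with
  | zero => simp
  | succ n ih =>
    rw [pow_succ, pow_succ, ContinuousLinearMap.mul_apply, ContinuousLinearMap.mul_apply]
    have hx : ((restrictCLM T M h) x : X) = T (x : X) := rfl
    calc (((restrictCLM T M h) ^ n) (restrictCLM T M h x) : X)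
        = (T ^ n) ((restrictCLM T M h x : M) : X) := ih _
    _ = (T ^ n) (T (x : X)) := by rw [hx]
    _ = (T ^ (n+1)) (x : X) := by rw [pow_succ, ContinuousLinearMap.mul_apply]
lemma norm_restrict_pow_apply (T : X →L[ℂ] X) (M : Submodule ℂ X) (h : ∀ x ∈ M, T x ∈ M)
    (n : ℕ) (x : M) : ‖((restrictCLM T M h) ^ n) x‖ = ‖(T ^ n) (x : X)‖ := by
  rw [← restrict_pow T M h n x]; rfl

set_option synthInstance.maxHeartbeats 1000000 in
set_option maxHeartbeats 1000000 in
/-- Key lemma: if every element of a closed invariant subspace is in the quasinilpotent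
part, then the restriction is quasinilpotent. -/
lemma quasinilpotent_restrict (T : X →L[ℂ] X) (N : Submodule ℂ X)
    (hN : IsClosed (N : Set X)) (hinv : ∀ x ∈ N, T x ∈ N)
    (hsub : (N : Set X) ⊆ quasinilpotentPart T) :
    IsQuasinilpotent (restrictCLM T N hinv) := by
  haveI : CompleteSpace N := hN.completeSpace_coe
  set Q := restrictCLM T N hinv with hQ
  rw [isQuasinilpotent_iff]
  intro ε hε
  -- Banach–Steinhaus on the family (ε⁻¹)^n • Q^n
  have hpt : ∀ x : N, ∃ C : ℝ, ∀ n : ℕ, ‖((ε⁻¹ ^ n : ℝ) • (Q ^ n)) x‖ ≤ C := by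
    intro x
    obtain ⟨C, hC, hb⟩ := (mem_qnp_iff T (x : X)).1 (hsub x.2) ε hε
    refine ⟨C, fun n => ?_⟩
    rw [ContinuousLinearMap.smul_apply, norm_smul, Real.norm_of_nonneg (by positivity),
      norm_restrict_pow_apply]
    have := hb n
    calc ε⁻¹ ^ n * ‖(T ^ n) (x : X)‖ ≤ ε⁻¹ ^ n * (C * ε ^ n) := by
          exact mul_le_mul_of_nonneg_left this (by positivity)
    _ = C * (ε⁻¹ * ε) ^ n := by ring
    _ = C := by rw [inv_mul_cancel₀ (ne_of_gt hε)]; simp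
  obtain ⟨C', hC'⟩ := banach_steinhaus hpt
  refine ⟨max C' 1, lt_of_lt_of_le one_pos (le_max_right _ _), fun n => ?_⟩
  have hεn : (0:ℝ) < ε ^ n := pow_pos hε n
  refine ContinuousLinearMap.opNorm_le_bound _ (by positivity) fun x => ?_
  have h1 : ‖((ε⁻¹ ^ n : ℝ) • (Q ^ n)) x‖ ≤ C' * ‖x‖ :=
    ((ε⁻¹ ^ n : ℝ) • (Q ^ n)).le_of_opNorm_le (hC' n) x
  rw [ContinuousLinearMap.smul_apply, norm_smul,
    Real.norm_of_nonneg (by positivity : (0:ℝ) ≤ ε⁻¹ ^ n)] at h1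
  have h3 : ε⁻¹ ^ n * ε ^ n = 1 := by
    rw [← mul_pow, inv_mul_cancel₀ (ne_of_gt hε), one_pow]
  have h4 : ‖(Q ^ n) x‖ = ε ^ n * (ε⁻¹ ^ n * ‖(Q ^ n) x‖) := by
    rw [← mul_assoc, mul_comm (ε ^ n), h3, one_mul]
  calc ‖(Q ^ n) x‖ = ε ^ n * (ε⁻¹ ^ n * ‖(Q ^ n) x‖) := h4
  _ ≤ ε ^ n * (C' * ‖x‖) := mul_le_mul_of_nonneg_left h1 hεn.le
  _ ≤ max C' 1 * ε ^ n * ‖x‖ := by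
      have h5 : C' ≤ max C' 1 := le_max_left _ _
      have h6 : (0:ℝ) ≤ ‖x‖ := norm_nonneg _
      nlinarith [mul_le_mul_of_nonneg_right (mul_le_mul_of_nonneg_left h5 hεn.le) h6]
lemma exists_preimage_of_closed_range (A : X →L[ℂ] X) (h : IsClosed (Set.range A)) :
    ∃ c, 0 < c ∧ ∀ y ∈ Set.range A, ∃ v, A v = y ∧ ‖v‖ ≤ c * ‖y‖ := by
  have hR : IsClosed ((LinearMap.range (A : X →ₗ[ℂ] X) : Submodule ℂ X) : Set X) := by
    have he : ((LinearMap.range (A : X →ₗ[ℂ] X) : Submodule ℂ X) : Set X) = Set.range A := by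
      ext y; simp [LinearMap.mem_range]
    rw [he]; exact h
  haveI : CompleteSpace (LinearMap.range (A : X →ₗ[ℂ] X) : Submodule ℂ X) := hR.completeSpace_coe
  set f : X →L[ℂ] (LinearMap.range (A : X →ₗ[ℂ] X) : Submodule ℂ X) :=
    A.codRestrict (LinearMap.range (A : X →ₗ[ℂ] X)) (fun x => LinearMap.mem_range_self _ x) with hf
  have hsurj : Function.Surjective f := by
    rintro ⟨y, hy⟩
    obtain ⟨x, hx⟩ := LinearMap.mem_range.1 hy
    exact ⟨x, Subtype.ext hx⟩
  obtain ⟨C, hC, hp⟩ := f.exists_preimage_norm_le hsurj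
  refine ⟨C, hC, fun y hy => ?_⟩
  have hy' : y ∈ (LinearMap.range (A : X →ₗ[ℂ] X) : Submodule ℂ X) := LinearMap.mem_range.2 hy
  obtain ⟨v, hv1, hv2⟩ := hp ⟨y, hy'⟩
  refine ⟨v, ?_, ?_⟩
  · have : ((f v : (LinearMap.range (A : X →ₗ[ℂ] X) : Submodule ℂ X)) : X) = y := by rw [hv1]
    exact this
  · exact hv2

lemma qnp_eq_zero_of_semiregular (A : X →L[ℂ] X) (hA : SemiRegular A)
    (hcl : IsClosed (quasinilpotentPart A)) : ∀ x ∈ quasinilpotentPart A, x = 0 := by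
  obtain ⟨c, hc, hpre⟩ := exists_preimage_of_closed_range A hA.1
  by_cases hker : ∀ (k : ℕ) (x : X), (A ^ k) x = 0 → x = 0
  · -- A is injective with closed range, hence bounded below; then H₀(A) = 0 directly.
    have hlow : ∀ x : X, ‖x‖ ≤ c * ‖A x‖ := by
      intro x
      obtain ⟨v, hv1, hv2⟩ := hpre (A x) ⟨x, rfl⟩
      have hvx : v = x := by
        have h0 : (A ^ 1) (v - x) = 0 := by
          rw [pow_one, map_sub, hv1, sub_self]
        exact sub_eq_zero.1 (hker 1 (v - x) h0)
      rw [← hvx]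
      calc ‖v‖ ≤ c * ‖A x‖ := hv2
      _ = c * ‖A v‖ := by rw [hvx]
    have hiter : ∀ (n : ℕ) (x : X), ‖x‖ ≤ c ^ n * ‖(A ^ n) x‖ := by
      intro n
      induction n with
      | zero => intro x; simp
      | succ n ih =>
        intro x
        have h1 : ‖x‖ ≤ c * ‖A x‖ := hlow x
        have h2 : ‖A x‖ ≤ c ^ n * ‖(A ^ n) (A x)‖ := ih (A x)
        have h3 : (A ^ n) (A x) = (A ^ (n + 1)) x := by
          rw [pow_succ, ContinuousLinearMap.mul_apply]
        rw [h3] at h2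
        calc ‖x‖ ≤ c * ‖A x‖ := h1
        _ ≤ c * (c ^ n * ‖(A ^ (n+1)) x‖) := mul_le_mul_of_nonneg_left h2 hc.le
        _ = c ^ (n+1) * ‖(A ^ (n+1)) x‖ := by ring
    intro x hx
    by_contra hx0
    obtain ⟨C, hC, hb⟩ := (mem_qnp_iff A x).1 hx (1 / (2 * c)) (by positivity)
    have hxpos : 0 < ‖x‖ := norm_pos_iff.2 hx0
    obtain ⟨n, hn⟩ := pow_unbounded_of_one_lt (C / ‖x‖) (by norm_num : (1:ℝ) < 2)
    have h1 : ‖x‖ ≤ c ^ n * ‖(A ^ n) x‖ := hiter n x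
    have h2 : ‖(A ^ n) x‖ ≤ C * (1 / (2 * c)) ^ n := hb n
    have h3 : c ^ n * (1 / (2 * c)) ^ n = 1 / 2 ^ n := by
      rw [← mul_pow]
      congr 1
      field_simp
      ring_nf; rw [← mul_pow]; norm_num
    have h4 : ‖x‖ ≤ C / 2 ^ n := by
      calc ‖x‖ ≤ c ^ n * ‖(A ^ n) x‖ := h1
      _ ≤ c ^ n * (C * (1 / (2 * c)) ^ n) := mul_le_mul_of_nonneg_left h2 (by positivity)
      _ = C * (c ^ n * (1 / (2 * c)) ^ n) := by ring
      _ = C * (1 / 2 ^ n) := by rw [h3]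
      _ = C / 2 ^ n := by ring
    have h5 : C / ‖x‖ < 2 ^ n := hn
    have h2n : (0:ℝ) < 2 ^ n := by positivity
    rw [div_lt_iff₀ hxpos] at h5
    rw [le_div_iff₀ h2n] at h4
    nlinarith
  · -- there is a nonzero element killed by a power of A : contradiction.
    exfalso
    push_neg at hker
    obtain ⟨k, u₀, hu₀, hu0ne⟩ := hker
    have hrec : ∀ j : ℕ, ∃ w : X, (∃ m, (A ^ m) w = 0) ∧ (A ^ j) w = u₀ ∧
        ‖w‖ ≤ c ^ j * ‖u₀‖ := by
      intro j
      induction j with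
      | zero => exact ⟨u₀, ⟨k, hu₀⟩, by simp, by simp⟩
      | succ j ih =>
        obtain ⟨w, ⟨m, hm⟩, hw1, hw2⟩ := ih
        have hwr : w ∈ Set.range A := hA.2 m w hm
        obtain ⟨v, hv1, hv2⟩ := hpre w hwr
        refine ⟨v, ⟨m + 1, ?_⟩, ?_, ?_⟩
        · rw [pow_succ, ContinuousLinearMap.mul_apply, hv1, hm]
        · rw [pow_succ, ContinuousLinearMap.mul_apply, hv1, hw1]
        · calc ‖v‖ ≤ c * ‖w‖ := hv2
          _ ≤ c * (c ^ j * ‖u₀‖) := mul_le_mul_of_nonneg_left hw2 hc.le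
          _ = c ^ (j+1) * ‖u₀‖ := by ring
    have hq := quasinilpotent_restrict A (qnpSub A)
      (by rw [qnpSub_coe]; exact hcl) (fun x hx => qnp_inv A hx)
      (by rw [qnpSub_coe])
    rw [isQuasinilpotent_iff] at hq
    obtain ⟨C, hC, hb⟩ := hq (1 / (2 * c)) (by positivity)
    have hu0pos : 0 < ‖u₀‖ := norm_pos_iff.2 hu0ne
    obtain ⟨j, hj⟩ := pow_unbounded_of_one_lt C (by norm_num : (1:ℝ) < 2)
    obtain ⟨w, ⟨m, hm⟩, hw1, hw2⟩ := hrec j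
    have hwmem : w ∈ qnpSub A := mem_qnp_of_pow_eq_zero A hm
    set Q := restrictCLM A (qnpSub A) (fun x hx => qnp_inv A hx) with hQdef
    have he1 : ‖(Q ^ j) (⟨w, hwmem⟩ : qnpSub A)‖ = ‖(A ^ j) w‖ :=
      norm_restrict_pow_apply A (qnpSub A) _ j ⟨w, hwmem⟩
    have he2 : ‖(⟨w, hwmem⟩ : qnpSub A)‖ = ‖w‖ := rfl
    have hle : ‖(A ^ j) w‖ ≤ (C * (1 / (2 * c)) ^ j) * ‖w‖ := by
      rw [← he1]
      calc ‖(Q ^ j) (⟨w, hwmem⟩ : qnpSub A)‖ ≤ ‖Q ^ j‖ * ‖(⟨w, hwmem⟩ : qnpSub A)‖ :=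
        (Q ^ j).le_opNorm _
      _ ≤ (C * (1 / (2 * c)) ^ j) * ‖w‖ := by
          rw [he2]
          exact mul_le_mul_of_nonneg_right (hb j) (norm_nonneg w)
    rw [hw1] at hle
    have h3 : (1 / (2 * c)) ^ j * c ^ j = 1 / 2 ^ j := by
      rw [← mul_pow]
      congr 1
      field_simp
      ring_nf; rw [← mul_pow]; norm_num
    have h4 : ‖u₀‖ ≤ C / 2 ^ j * ‖u₀‖ := by
      calc ‖u₀‖ ≤ (C * (1 / (2 * c)) ^ j) * ‖w‖ := hle
      _ ≤ (C * (1 / (2 * c)) ^ j) * (c ^ j * ‖u₀‖) := by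
          exact mul_le_mul_of_nonneg_left hw2 (by positivity)
      _ = C * ((1 / (2 * c)) ^ j * c ^ j) * ‖u₀‖ := by ring
      _ = C * (1 / 2 ^ j) * ‖u₀‖ := by rw [h3]
      _ = C / 2 ^ j * ‖u₀‖ := by ring
    have h2j : (0:ℝ) < 2 ^ j := by positivity
    have h5 : C / 2 ^ j < 1 := by
      rw [div_lt_one h2j]; exact hj
    nlinarith
/-- `T` is left generalized Drazin invertible iff `T` admits a GKD
and `H₀(T)` is closed. -/
theorem left_gd_iff_gkd_h0_closed (T : X →L[ℂ] X) :
    LeftGDInvertible T ↔ HasGKD T ∧ IsClosed (quasinilpotentPart T) := by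
  constructor
  · rintro ⟨hcl, M, hMcl, hMinv, hTMcl, hint, hspan⟩
    refine ⟨⟨M, qnpSub T, ?_⟩, hcl⟩
    refine { closedM := hMcl
             closedN := by rw [qnpSub_coe]; exact hcl
             invM := hMinv
             invN := fun x hx => qnp_inv T hx
             compl := ?_
             semiregM := ?_
             quasiN := quasinilpotent_restrict T _ (by rw [qnpSub_coe]; exact hcl)
               (fun x hx => qnp_inv T hx) (by rw [qnpSub_coe]) }
    · constructor
      · rw [Submodule.disjoint_def]
        intro x hxM hxQ
        have : x ∈ ((M : Set X) ∩ quasinilpotentPart T) := ⟨hxM, hxQ⟩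
        rw [hint] at this
        simpa using this
      · rw [codisjoint_iff, eq_top_iff]
        intro x _
        obtain ⟨m, hm, h, hh, hsum⟩ := hspan x
        exact Submodule.mem_sup.2 ⟨m, hm, h, hh, hsum.symm⟩
    · constructor
      · have hre : Set.range (restrictCLM T M hMinv) =
            Subtype.val ⁻¹' (T '' (M : Set X)) := by
          ext y
          constructor
          · rintro ⟨z, rfl⟩
            exact ⟨(z : X), z.2, rfl⟩
          · rintro ⟨m, hm, hmy⟩
            exact ⟨⟨m, hm⟩, Subtype.ext hmy⟩
        rw [hre]
        exact hTMcl.preimage continuous_subtype_val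
      · intro n x hx
        have hx' : (T ^ n) (x : X) = 0 := by
          rw [← restrict_pow T M hMinv n x, hx]
          rfl
        have hmem : (x : X) ∈ ((M : Set X) ∩ quasinilpotentPart T) :=
          ⟨x.2, mem_qnp_of_pow_eq_zero T hx'⟩
        rw [hint] at hmem
        have hx0 : x = 0 := Subtype.ext (by simpa using hmem)
        exact ⟨0, by rw [map_zero, hx0]⟩
  · rintro ⟨⟨M, N, gkd⟩, hcl⟩
    haveI : CompleteSpace M := gkd.closedM.completeSpace_coe
    set A := restrictCLM T M gkd.invM with hA
    have hqA : quasinilpotentPart A = Subtype.val ⁻¹' (quasinilpotentPart T) := by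
      ext x
      simp only [quasinilpotentPart, mem_setOf_eq, mem_preimage]
      constructor
      · intro h
        refine h.congr fun n => ?_
        rw [norm_restrict_pow_apply]
      · intro h
        refine h.congr fun n => ?_
        rw [norm_restrict_pow_apply]
    have hclA : IsClosed (quasinilpotentPart A) := by
      rw [hqA]; exact hcl.preimage continuous_subtype_val
    have key : ∀ x : X, x ∈ M → x ∈ quasinilpotentPart T → x = 0 := by
      intro x hxM hxQ
      have h0 := qnp_eq_zero_of_semiregular A gkd.semiregM hclA ⟨x, hxM⟩
        (by rw [hqA]; exact hxQ)
      simpa using congrArg Subtype.val h0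
    have hNsub : (N : Set X) ⊆ quasinilpotentPart T := by
      intro x hx
      have hq := gkd.quasiN
      rw [isQuasinilpotent_iff] at hq
      rw [mem_qnp_iff]
      intro ε hε
      obtain ⟨C, hC, hb⟩ := hq ε hε
      refine ⟨C * (‖x‖ + 1), by positivity, fun n => ?_⟩
      set B := restrictCLM T N gkd.invN with hB
      have h1 : ‖(T ^ n) x‖ = ‖(B ^ n) (⟨x, hx⟩ : N)‖ :=
        (norm_restrict_pow_apply T N gkd.invN n ⟨x, hx⟩).symm
      have h2 : ‖(⟨x, hx⟩ : N)‖ = ‖x‖ := rfl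
      calc ‖(T ^ n) x‖ = ‖(B ^ n) (⟨x, hx⟩ : N)‖ := h1
      _ ≤ ‖B ^ n‖ * ‖x‖ := by rw [← h2]; exact (B ^ n).le_opNorm _
      _ ≤ (C * ε ^ n) * ‖x‖ :=
          mul_le_mul_of_nonneg_right (hb n) (norm_nonneg x)
      _ ≤ C * (‖x‖ + 1) * ε ^ n := by
          nlinarith [pow_pos hε n, norm_nonneg x, mul_pos hC (pow_pos hε n)]
    refine ⟨hcl, M, gkd.closedM, gkd.invM, ?_, ?_, ?_⟩
    · have him : T '' (M : Set X) = Subtype.val '' (Set.range A) := by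
        ext y
        constructor
        · rintro ⟨m, hm, rfl⟩
          exact ⟨A ⟨m, hm⟩, ⟨⟨m, hm⟩, rfl⟩, rfl⟩
        · rintro ⟨z, ⟨u, rfl⟩, rfl⟩
          exact ⟨(u : X), u.2, rfl⟩
      rw [him]
      exact gkd.closedM.isClosedEmbedding_subtypeVal.isClosedMap _ gkd.semiregM.1
    · ext y
      constructor
      · rintro ⟨hyM, hyQ⟩
        simpa using key y hyM hyQ
      · intro hy
        have hy0 : y = 0 := by simpa using hy
        rw [hy0]
        exact ⟨M.zero_mem, zero_mem_qnp T⟩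
    · intro x
      have hx : x ∈ M ⊔ N := by rw [gkd.compl.sup_eq_top]; trivial
      obtain ⟨m, hm, h, hh, hsum⟩ := Submodule.mem_sup.1 hx
      exact ⟨m, hm, h, hNsub hh, hsum.symm⟩

end Paper
end

section
/- Let X be a complex Banach space and T a bounded linear operator on X. Then T is right generalized Drazin invertible if and only if there exists a bounded projection P on X (P² = P) such that TP = PT, T + P is surjective, TP is quasinilpotent, and ker(P) = K(T). -/
open Filter Topology Set

namespace Paper

variable {Y : Type*} [NormedAddCommGroup Y] [NormedSpace ℂ Y]

variable {X : Type*} [NormedAddCommGroup X] [NormedSpace ℂ X] [CompleteSpace X]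

section Aux

lemma zero_mem_analyticCore (T : X →L[ℂ] X) : (0 : X) ∈ analyticCore T :=
  ⟨fun _ => 0, 1, one_pos, by simp, fun n _ => by simp, fun n _ => by simp⟩

lemma aux_pow_le {c s : ℝ} (hc : 0 ≤ c) (hs : 0 ≤ s) {m n : ℕ} (hmn : m ≤ n) (hn : 1 ≤ n) :
    c ^ m * s ≤ (max c 1 * max 1 s) ^ n := by
  have h1 : (1:ℝ) ≤ max c 1 := le_max_right _ _
  have h2 : (1:ℝ) ≤ max 1 s := le_max_left _ _
  have hcm : c ^ m ≤ max c 1 ^ n :=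
    le_trans (pow_le_pow_left₀ hc (le_max_left c 1) m) (pow_le_pow_right₀ h1 hmn)
  have hsn : s ≤ max 1 s ^ n :=
    le_trans (le_max_right 1 s) (le_self_pow₀ h2 (by omega))
  calc c ^ m * s ≤ max c 1 ^ n * max 1 s ^ n :=
        mul_le_mul hcm hsn hs (pow_nonneg (le_trans zero_le_one h1) n)
    _ = (max c 1 * max 1 s) ^ n := (mul_pow _ _ _).symm

lemma smul_mem_analyticCore (T : X →L[ℂ] X) {x : X} (c : ℂ) (hx : x ∈ analyticCore T) :
    c • x ∈ analyticCore T := by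
  obtain ⟨u, δ, hδ, h1, h2, h3⟩ := hx
  refine ⟨fun n => c • u n, δ, hδ, by rw [map_smul, h1], fun n hn => by rw [map_smul, h2 n hn],
    fun n hn => ?_⟩
  rw [norm_smul, norm_smul]
  calc ‖c‖ * ‖u n‖ ≤ ‖c‖ * (δ ^ n * ‖x‖) :=
        mul_le_mul_of_nonneg_left (h3 n hn) (norm_nonneg c)
    _ = δ ^ n * (‖c‖ * ‖x‖) := by ring

lemma add_mem_analyticCore (T : X →L[ℂ] X) {x y : X} (hx : x ∈ analyticCore T)
    (hy : y ∈ analyticCore T) : x + y ∈ analyticCore T := by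
  by_cases h0 : x + y = 0
  · rw [h0]; exact zero_mem_analyticCore T
  obtain ⟨u, δ₁, hδ₁, hu1, hu2, hu3⟩ := hx
  obtain ⟨v, δ₂, hδ₂, hv1, hv2, hv3⟩ := hy
  set c := max δ₁ δ₂ with hc
  have hc0 : 0 < c := lt_of_lt_of_le hδ₁ (le_max_left _ _)
  have hxy0 : 0 < ‖x + y‖ := norm_pos_iff.mpr h0
  set s := (‖x‖ + ‖y‖) / ‖x + y‖ with hs
  have hs0 : 0 ≤ s := div_nonneg (by positivity) hxy0.le
  refine ⟨fun n => u n + v n, max c 1 * max 1 s, by positivity, by rw [map_add, hu1, hv1],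
    fun n hn => by rw [map_add, hu2 n hn, hv2 n hn], fun n hn => ?_⟩
  have key : c ^ n * s ≤ (max c 1 * max 1 s) ^ n := aux_pow_le hc0.le hs0 le_rfl hn
  calc ‖u n + v n‖ ≤ δ₁ ^ n * ‖x‖ + δ₂ ^ n * ‖y‖ :=
        (norm_add_le _ _).trans (add_le_add (hu3 n hn) (hv3 n hn))
    _ ≤ c ^ n * ‖x‖ + c ^ n * ‖y‖ := add_le_add
        (mul_le_mul_of_nonneg_right (pow_le_pow_left₀ hδ₁.le (le_max_left _ _) n) (norm_nonneg x))
        (mul_le_mul_of_nonneg_right (pow_le_pow_left₀ hδ₂.le (le_max_right _ _) n) (norm_nonneg y))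
    _ = c ^ n * (‖x‖ + ‖y‖) := by ring
    _ = c ^ n * s * ‖x + y‖ := by rw [mul_assoc, hs, div_mul_cancel₀ _ hxy0.ne']
    _ ≤ (max c 1 * max 1 s) ^ n * ‖x + y‖ := mul_le_mul_of_nonneg_right key hxy0.le

/-- The analytic core as a submodule. -/
def coreSubmodule (T : X →L[ℂ] X) : Submodule ℂ X where
  carrier := analyticCore T
  zero_mem' := zero_mem_analyticCore T
  add_mem' := fun hx hy => add_mem_analyticCore T hx hy
  smul_mem' := fun c _ hx => smul_mem_analyticCore T c hx

lemma analyticCore_image (T : X →L[ℂ] X) {x : X} (hx : x ∈ analyticCore T) :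
    T x ∈ analyticCore T := by
  by_cases h0 : T x = 0
  · rw [h0]; exact zero_mem_analyticCore T
  obtain ⟨u, δ, hδ, hu1, hu2, hu3⟩ := hx
  have hTx : 0 < ‖T x‖ := norm_pos_iff.mpr h0
  set s := ‖x‖ / ‖T x‖ with hs
  have hs0 : 0 ≤ s := by positivity
  refine ⟨fun n => match n with | 0 => 0 | 1 => x | (m+2) => u (m+1),
    max δ 1 * max 1 s, by positivity, rfl, ?_, ?_⟩
  · intro n hn
    match n, hn with
    | 1, _ => exact hu1
    | (m+2), _ => exact hu2 (m+1) (by omega)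
  · intro n hn
    match n, hn with
    | 1, _ =>
      show ‖x‖ ≤ (max δ 1 * max 1 s) ^ 1 * ‖T x‖
      have h1 : δ ^ 0 * s ≤ (max δ 1 * max 1 s) ^ 1 := aux_pow_le hδ.le hs0 (by omega) le_rfl
      calc ‖x‖ = δ ^ 0 * s * ‖T x‖ := by
            rw [pow_zero, one_mul, hs, div_mul_cancel₀ _ hTx.ne']
        _ ≤ _ := mul_le_mul_of_nonneg_right h1 hTx.le
    | (m+2), _ =>
      show ‖u (m+1)‖ ≤ (max δ 1 * max 1 s) ^ (m+2) * ‖T x‖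
      have key : δ ^ (m+1) * s ≤ (max δ 1 * max 1 s) ^ (m+2) :=
        aux_pow_le hδ.le hs0 (by omega) (by omega)
      calc ‖u (m+1)‖ ≤ δ ^ (m+1) * ‖x‖ := hu3 (m+1) (by omega)
        _ = δ ^ (m+1) * s * ‖T x‖ := by rw [mul_assoc, hs, div_mul_cancel₀ _ hTx.ne']
        _ ≤ _ := mul_le_mul_of_nonneg_right key hTx.le

lemma analyticCore_surj (T : X →L[ℂ] X) {k : X} (hk : k ∈ analyticCore T) :
    ∃ m ∈ analyticCore T, T m = k := by
  obtain ⟨u, δ, hδ, hu1, hu2, hu3⟩ := hk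
  by_cases h0 : u 1 = 0
  · exact ⟨0, zero_mem_analyticCore T, by rw [map_zero, ← hu1, h0, map_zero]⟩
  refine ⟨u 1, ?_, hu1⟩
  have hu10 : 0 < ‖u 1‖ := norm_pos_iff.mpr h0
  set s := ‖k‖ / ‖u 1‖ with hs
  have hs0 : 0 ≤ s := by positivity
  set c := max δ 1 with hc
  have hc1 : (1:ℝ) ≤ c := le_max_right _ _
  refine ⟨fun n => u (n+1), c ^ 2 * max 1 s, by positivity, hu2 1 le_rfl,
    fun n hn => hu2 (n+1) (by omega), fun n hn => ?_⟩
  have h1 : δ ^ (n+1) ≤ c ^ (2*n) :=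
    le_trans (pow_le_pow_left₀ hδ.le (le_max_left _ _) _) (pow_le_pow_right₀ hc1 (by omega))
  have h2 : s ≤ max 1 s ^ n :=
    le_trans (le_max_right 1 s) (le_self_pow₀ (le_max_left _ _) (by omega))
  calc ‖u (n+1)‖ ≤ δ ^ (n+1) * ‖k‖ := hu3 (n+1) (by omega)
    _ = δ ^ (n+1) * s * ‖u 1‖ := by rw [mul_assoc, hs, div_mul_cancel₀ _ hu10.ne']
    _ ≤ (c ^ 2 * max 1 s) ^ n * ‖u 1‖ := by
        refine mul_le_mul_of_nonneg_right ?_ hu10.le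
        calc δ ^ (n+1) * s ≤ c ^ (2*n) * max 1 s ^ n :=
              mul_le_mul h1 h2 hs0 (by positivity)
          _ = (c ^ 2 * max 1 s) ^ n := by rw [mul_pow, ← pow_mul]

lemma eventually_pow_norm_le {T : X →L[ℂ] X} {x : X} (hx : x ∈ quasinilpotentPart T)
    {ε : ℝ} (hε : 0 < ε) : ∀ᶠ n : ℕ in atTop, ‖(T ^ n) x‖ ≤ ε ^ n := by
  have h1 : ∀ᶠ n : ℕ in atTop, ‖(T ^ n) x‖ ^ (1/(n:ℝ)) < ε := hx.eventually (gt_mem_nhds hε)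
  filter_upwards [h1, eventually_ge_atTop 1] with n hn hn1
  calc ‖(T ^ n) x‖ = (‖(T ^ n) x‖ ^ ((n:ℝ)⁻¹)) ^ n :=
        (Real.rpow_inv_natCast_pow (norm_nonneg _) (by omega)).symm
    _ ≤ ε ^ n := by
        refine pow_le_pow_left₀ (Real.rpow_nonneg (norm_nonneg _) _) ?_ n
        rw [← one_div]; exact hn.le

lemma summable_pow_smul {T : X →L[ℂ] X} {x : X} (hx : x ∈ quasinilpotentPart T) (c : ℂ) :
    Summable fun n : ℕ => c ^ n • (T ^ n) x := by
  have hc1 : 0 < ‖c‖ + 1 := by positivity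
  have hε : 0 < (1/2) / (‖c‖ + 1) := by positivity
  have hkey : ‖c‖ * ((1/2) / (‖c‖ + 1)) ≤ 1/2 := by
    rw [mul_div_assoc', div_le_iff₀ hc1]
    nlinarith [norm_nonneg c]
  refine Summable.of_norm_bounded_eventually_nat (g := fun n => (1/2:ℝ)^n)
    (summable_geometric_of_lt_one (by norm_num) (by norm_num)) ?_
  filter_upwards [eventually_pow_norm_le hx hε] with n hn
  calc ‖c ^ n • (T ^ n) x‖ = ‖c‖ ^ n * ‖(T ^ n) x‖ := by rw [norm_smul, norm_pow]
    _ ≤ ‖c‖ ^ n * ((1/2)/(‖c‖+1)) ^ n := mul_le_mul_of_nonneg_left hn (by positivity)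
    _ = (‖c‖ * ((1/2)/(‖c‖+1))) ^ n := (mul_pow _ _ _).symm
    _ ≤ (1/2) ^ n := pow_le_pow_left₀ (by positivity) hkey n

lemma neumann {T : X →L[ℂ] X} {x : X} (hx : x ∈ quasinilpotentPart T) (c : ℂ) :
    (∑' n : ℕ, c ^ n • (T ^ n) x) - c • T (∑' n : ℕ, c ^ n • (T ^ n) x) = x := by
  set f : ℕ → X := fun n => c ^ n • (T ^ n) x with hf
  have hs : Summable f := summable_pow_smul hx c
  have hshift : ∀ n : ℕ, c • T (f n) = f (n + 1) := by
    intro n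
    simp only [hf]
    rw [map_smul, smul_smul, ← pow_succ', pow_succ' T n, ContinuousLinearMap.mul_apply]
  have hTsum : HasSum (fun n => c • T (f n)) (c • T (∑' n, f n)) :=
    (hs.hasSum.mapL T).const_smul c
  have hTsum' : HasSum (fun n => f (n+1)) (c • T (∑' n, f n)) := by
    simpa only [hshift] using hTsum
  have h3 := Summable.tsum_eq_zero_add hs
  rw [hTsum'.tsum_eq] at h3
  nth_rewrite 1 [h3]
  rw [add_sub_cancel_right]
  simp [hf]

lemma tsum_mem_of_closed {N : Submodule ℂ X} (hN : IsClosed (N : Set X)) {f : ℕ → X}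
    (hf : Summable f) (h : ∀ n, f n ∈ N) : (∑' n, f n) ∈ N := by
  refine hN.mem_of_tendsto hf.hasSum.tendsto_sum_nat (Filter.Eventually.of_forall fun n => ?_)
  exact Submodule.sum_mem N fun i _ => h i

lemma rpow_one_div_le {a : ℝ} (ha : 0 ≤ a) {n : ℕ} (hn : 1 ≤ n) :
    a ^ (1/(n:ℝ)) ≤ max 1 a := by
  rcases le_or_gt a 1 with h | h
  · exact le_trans (Real.rpow_le_one ha h (by positivity)) (le_max_left _ _)
  · have h1 : a ^ (1/(n:ℝ)) ≤ a ^ (1:ℝ) := by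
      refine Real.rpow_le_rpow_of_exponent_le h.le ?_
      rw [div_le_one (Nat.cast_pos.mpr (by omega))]
      exact_mod_cast hn
    rw [Real.rpow_one] at h1
    exact le_trans h1 (le_max_right _ _)

lemma isQuasinilpotent_of_forall_mem (Q : X →L[ℂ] X)
    (h : ∀ x : X, x ∈ quasinilpotentPart Q) : IsQuasinilpotent Q := by
  have hspec : spectrum ℂ Q ⊆ {0} := by
    intro l hl
    by_contra hl0
    simp only [Set.mem_singleton_iff] at hl0
    rw [spectrum.mem_iff] at hl
    apply hl
    rw [ContinuousLinearMap.isUnit_iff_bijective]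
    have happ : ∀ v : X, (algebraMap ℂ (X →L[ℂ] X) l - Q) v = l • v - Q v := by
      intro v
      simp [Algebra.algebraMap_eq_smul_one]
    constructor
    · intro a b hab
      have hz : (algebraMap ℂ (X →L[ℂ] X) l - Q) (a - b) = 0 := by
        rw [map_sub, hab, sub_self]
      rw [happ] at hz
      have hQ : Q (a - b) = l • (a - b) := by
        rw [sub_eq_zero] at hz; exact hz.symm
      set v := a - b with hv
      have hiter : ∀ n : ℕ, (Q ^ n) v = l ^ n • v := by
        intro n
        induction n with
        | zero => simp
        | succ n ih =>
            rw [pow_succ', ContinuousLinearMap.mul_apply, ih, map_smul, hQ,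
              smul_smul, ← pow_succ]
      have hl0' : 0 < ‖l‖ := norm_pos_iff.mpr hl0
      have hev : ∀ᶠ n : ℕ in atTop, ‖(Q ^ n) v‖ ≤ (‖l‖/2) ^ n :=
        eventually_pow_norm_le (h v) (by positivity)
      have hvle : ‖v‖ ≤ 0 := by
        have hhalf : Tendsto (fun n : ℕ => ((1:ℝ)/2) ^ n) atTop (𝓝 0) :=
          tendsto_pow_atTop_nhds_zero_of_lt_one (by norm_num) (by norm_num)
        refine ge_of_tendsto hhalf ?_
        filter_upwards [hev] with n hn
        have hln : 0 < ‖l‖ ^ n := pow_pos hl0' n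
        rw [hiter n, norm_smul, norm_pow] at hn
        have hb : ‖l‖ ^ n * ‖v‖ ≤ ‖l‖ ^ n * ((1/2) ^ n) := by
          calc ‖l‖ ^ n * ‖v‖ ≤ (‖l‖/2) ^ n := hn
            _ = ‖l‖ ^ n * (1/2) ^ n := by rw [← mul_pow]; congr 1; ring
        exact (mul_le_mul_iff_right₀ hln).mp hb
      have hv0 : v = 0 := norm_le_zero_iff.mp hvle
      exact sub_eq_zero.mp hv0
    · intro y
      refine ⟨l⁻¹ • (∑' n : ℕ, (l⁻¹) ^ n • (Q ^ n) y), ?_⟩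
      rw [happ, map_smul, smul_smul, mul_inv_cancel₀ hl0, one_smul]
      exact neumann (h y) l⁻¹
  have hrad : spectralRadius ℂ Q = 0 := by
    refine le_antisymm ?_ (zero_le)
    refine iSup₂_le fun k hk => ?_
    have hk0 : k = 0 := hspec hk
    simp [hk0]
  have hG := spectrum.pow_norm_pow_one_div_tendsto_nhds_spectralRadius Q
  rw [hrad] at hG
  have hcomp := (ENNReal.tendsto_toReal ENNReal.zero_ne_top).comp hG
  rw [ENNReal.toReal_zero] at hcomp
  exact hcomp.congr fun n => ENNReal.toReal_ofReal (Real.rpow_nonneg (norm_nonneg _) _)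

lemma pow_succ_of_idem {P : X →L[ℂ] X} (hP : P * P = P) : ∀ n : ℕ, P ^ (n+1) = P := by
  intro n
  induction n with
  | zero => rw [pow_one]
  | succ n ih => rw [pow_succ, ih, hP]

lemma mul_pow_of_comm_idem {T P : X →L[ℂ] X} (hc : T * P = P * T) (hP : P * P = P) (n : ℕ) :
    (T * P) ^ (n+1) = T ^ (n+1) * P := by
  rw [(show Commute T P from hc).mul_pow, pow_succ_of_idem hP]

end Aux


/-- `T` is right generalized Drazin invertible iff there is a bounded
projection `P` commuting with `T` with `T + P` surjective, `TP` quasinilpotent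
and `ker P = K(T)`. -/
theorem right_gd_iff_projection (T : X →L[ℂ] X) :
    RightGDInvertible T ↔
      ∃ P : X →L[ℂ] X, P * P = P ∧ T * P = P * T ∧ Function.Surjective (T + P) ∧
        IsQuasinilpotent (T * P) ∧ {x : X | P x = 0} = analyticCore T := by
  constructor
  · rintro ⟨hKclosed, N, hNclosed, hNinv, hNsub, hint, hdec⟩
    set K : Submodule ℂ X := coreSubmodule T with hK
    have hKc : IsClosed (K : Set X) := hKclosed
    have hcompl : IsCompl N K := by
      constructor
      · rw [Submodule.disjoint_def]
        intro x hxN hxK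
        have hx : x ∈ analyticCore T ∩ (N : Set X) := ⟨hxK, hxN⟩
        rw [hint] at hx
        exact hx
      · rw [codisjoint_iff, eq_top_iff]
        intro x _
        obtain ⟨k, hk, hh, hhN, hx⟩ := hdec x
        exact Submodule.mem_sup.mpr ⟨hh, hhN, k, hk, by rw [hx, add_comm]⟩
    set pr := Submodule.linearProjOfClosedCompl N K hcompl hNclosed hKc with hpr
    set P : X →L[ℂ] X := N.subtypeL.comp pr with hPdef
    have hPx : ∀ x, P x = ((N.projectionOnto K hcompl) x : X) := by
      intro x
      simp [hPdef, hpr, Submodule.coe_continuous_linearProjOfClosedCompl']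
    have hPmem : ∀ x, P x ∈ N := fun x => by
      rw [hPx]; exact ((N.projectionOnto K hcompl) x).2
    have hPleft : ∀ x ∈ N, P x = x := by
      intro x hx
      have h1 := Submodule.projectionOnto_apply_left hcompl (⟨x, hx⟩ : N)
      rw [hPx]
      exact congrArg Subtype.val h1
    have hker : ∀ x, (P x = 0 ↔ x ∈ analyticCore T) := by
      intro x
      rw [hPx, Submodule.coe_eq_zero, Submodule.projectionOnto_apply_eq_zero_iff]
      exact Iff.rfl
    have hPP : P * P = P := by
      ext x
      rw [ContinuousLinearMap.mul_apply]
      exact hPleft _ (hPmem x)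
    have hsub : ∀ x, x - P x ∈ analyticCore T := by
      intro x
      rw [← hker, map_sub, hPleft _ (hPmem x), sub_self]
    have hcomm : T * P = P * T := by
      ext x
      rw [ContinuousLinearMap.mul_apply, ContinuousLinearMap.mul_apply]
      have hparts : P x + (x - P x) = x := by abel
      have h1 : T x = T (P x) + T (x - P x) := by rw [← map_add, hparts]
      rw [h1, map_add]
      have h2 : P (T (x - P x)) = 0 := (hker _).mpr (analyticCore_image T (hsub x))
      have h3 : P (T (P x)) = T (P x) := hPleft _ (hNinv _ (hPmem x))
      rw [h2, h3, add_zero]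
    have hquasiTP : IsQuasinilpotent (T * P) := by
      apply isQuasinilpotent_of_forall_mem
      intro x
      have hPxH : P x ∈ quasinilpotentPart T := hNsub (hPmem x)
      have heq : ∀ᶠ n : ℕ in atTop,
          ‖(T ^ n) (P x)‖ ^ (1/(n:ℝ)) = ‖((T * P) ^ n) x‖ ^ (1/(n:ℝ)) := by
        filter_upwards [eventually_ge_atTop 1] with n hn
        match n, hn with
        | (m+1), _ =>
          rw [mul_pow_of_comm_idem hcomm hPP, ContinuousLinearMap.mul_apply]
      exact Filter.Tendsto.congr' heq hPxH
    have hsurj : Function.Surjective (T + P) := by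
      intro y
      obtain ⟨k, hk, nn, hnn, hy⟩ := hdec y
      obtain ⟨m, hm, hTm⟩ := analyticCore_surj T hk
      have hnnH : nn ∈ quasinilpotentPart T := hNsub hnn
      set f : ℕ → X := fun j => (-1:ℂ) ^ j • (T ^ j) nn with hfdef
      have hsum : Summable f := summable_pow_smul hnnH (-1)
      set z := ∑' j, f j with hz
      have hTj : ∀ j, (T ^ j) nn ∈ N := by
        intro j
        induction j with
        | zero => simpa using hnn
        | succ j ih => rw [pow_succ', ContinuousLinearMap.mul_apply]; exact hNinv _ ih
      have hzN : z ∈ N := tsum_mem_of_closed hNclosed hsum fun j => Submodule.smul_mem N _ (hTj j)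
      have hneu : z - (-1:ℂ) • T z = nn := neumann hnnH (-1)
      rw [neg_smul, one_smul, sub_neg_eq_add] at hneu
      refine ⟨m + z, ?_⟩
      rw [ContinuousLinearMap.add_apply, map_add, map_add]
      have hPm : P m = 0 := (hker m).mpr hm
      have hPz : P z = z := hPleft z hzN
      rw [hPm, hPz, hTm, hy, ← hneu]
      abel
    exact ⟨P, hPP, hcomm, hsurj, hquasiTP, Set.ext fun x => hker x⟩
  · rintro ⟨P, hPP, hcomm, _hsurj, hq, hkerEq⟩
    have hPTapp : ∀ x, P (T x) = T (P x) := by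
      intro x
      have h1 := congrArg (fun S : X →L[ℂ] X => S x) hcomm
      simpa [ContinuousLinearMap.mul_apply] using h1.symm
    have hPxP : ∀ x, P (P x) = P x := by
      intro x
      have h1 := congrArg (fun S : X →L[ℂ] X => S x) hPP
      simpa [ContinuousLinearMap.mul_apply] using h1
    have hcoreP : ∀ x, (x ∈ analyticCore T ↔ P x = 0) := by
      intro x
      rw [← hkerEq]
      exact Iff.rfl
    have hmemN : ∀ x : X, x ∈ LinearMap.ker ((ContinuousLinearMap.id ℂ X - P : X →L[ℂ] X) : X →ₗ[ℂ] X) ↔ P x = x := by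
      intro x
      rw [LinearMap.mem_ker]
      constructor
      · intro hx
        have : x - P x = 0 := by simpa using hx
        rw [sub_eq_zero] at this
        exact this.symm
      · intro hx
        simp [hx]
    constructor
    · rw [← hkerEq]
      exact isClosed_eq P.continuous continuous_const
    · refine ⟨LinearMap.ker ((ContinuousLinearMap.id ℂ X - P : X →L[ℂ] X) : X →ₗ[ℂ] X), ?_, ?_, ?_, ?_, ?_⟩
      · exact ContinuousLinearMap.isClosed_ker _
      · intro x hx
        rw [hmemN] at hx ⊢
        rw [hPTapp, hx]
      · intro x hx
        have hx' : P x = x := (hmemN x).mp hx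
        have hTP : ∀ m : ℕ, ((T * P) ^ (m+1)) x = (T ^ (m+1)) x := by
          intro m
          rw [mul_pow_of_comm_idem hcomm hPP, ContinuousLinearMap.mul_apply, hx']
        show Tendsto (fun n : ℕ => ‖(T ^ n) x‖ ^ (1/(n:ℝ))) atTop (𝓝 0)
        have hM : Tendsto (fun n : ℕ => ‖(T * P) ^ n‖ ^ (1/(n:ℝ)) * max 1 ‖x‖) atTop (𝓝 0) := by
          simpa using hq.mul_const (max 1 ‖x‖)
        refine squeeze_zero' (Filter.Eventually.of_forall fun n =>
          Real.rpow_nonneg (norm_nonneg _) _) ?_ hM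
        filter_upwards [eventually_ge_atTop 1] with n hn
        have hstep : ‖(T ^ n) x‖ = ‖((T * P) ^ n) x‖ := by
          match n, hn with
          | (m+1), _ => rw [hTP m]
        rw [hstep]
        calc ‖((T * P) ^ n) x‖ ^ (1/(n:ℝ)) ≤ (‖(T * P) ^ n‖ * ‖x‖) ^ (1/(n:ℝ)) :=
              Real.rpow_le_rpow (norm_nonneg _) (((T * P) ^ n).le_opNorm x) (by positivity)
          _ = ‖(T * P) ^ n‖ ^ (1/(n:ℝ)) * ‖x‖ ^ (1/(n:ℝ)) :=
              Real.mul_rpow (norm_nonneg _) (norm_nonneg _)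
          _ ≤ ‖(T * P) ^ n‖ ^ (1/(n:ℝ)) * max 1 ‖x‖ :=
              mul_le_mul_of_nonneg_left (rpow_one_div_le (norm_nonneg x) hn)
                (Real.rpow_nonneg (norm_nonneg _) _)
      · ext x
        simp only [Set.mem_inter_iff, Set.mem_singleton_iff, SetLike.mem_coe, hmemN x]
        constructor
        · rintro ⟨hc, hp⟩
          rw [← hp]
          exact (hcoreP x).mp hc
        · rintro rfl
          exact ⟨zero_mem_analyticCore T, map_zero P⟩
      · intro x
        refine ⟨x - P x, ?_, P x, ?_, by abel⟩
        · exact (hcoreP _).mpr (by rw [map_sub, hPxP, sub_self])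
        · exact (hmemN _).mpr (hPxP x)

end Paper
end

section
/- Let X be a complex Banach space, T a bounded linear operator on X, and S a generalized Drazin inverse of T (i.e., ST = TS, STS = S, and TST − T is quasinilpotent). Then T has the SVEP if and only if S has the SVEP. -/
open Filter Topology Set

namespace Paper

variable {Y : Type*} [NormedAddCommGroup Y] [NormedSpace ℂ Y]

variable {X : Type*} [NormedAddCommGroup X] [NormedSpace ℂ X] [CompleteSpace X]

lemma quasinil_eigen {Q : X →L[ℂ] X} (hQ : IsQuasinilpotent Q) {c : ℝ} (hc : 0 < c)
    {x : X} (hx : ∀ n : ℕ, c ^ n * ‖x‖ ≤ ‖Q ^ n‖ * ‖x‖) : x = 0 := by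
  by_contra hx0
  have hnx : 0 < ‖x‖ := norm_pos_iff.mpr hx0
  have hle : ∀ n : ℕ, c ^ n ≤ ‖Q ^ n‖ := fun n => le_of_mul_le_mul_right (hx n) hnx
  have hev : ∀ᶠ n : ℕ in atTop, ‖Q ^ n‖ ^ (1 / (n : ℝ)) < c :=
    hQ.eventually_lt_const hc
  obtain ⟨n, hn, hn1⟩ := (hev.and (eventually_ge_atTop 1)).exists
  have hne : (n : ℝ) ≠ 0 := by exact_mod_cast Nat.one_le_iff_ne_zero.mp hn1
  have hc' : c = ((c ^ n : ℝ)) ^ (1 / (n : ℝ)) := by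
    rw [← Real.rpow_natCast c n, ← Real.rpow_mul hc.le, mul_one_div, div_self hne,
      Real.rpow_one]
  have h2 : ((c ^ n : ℝ)) ^ (1 / (n : ℝ)) ≤ ‖Q ^ n‖ ^ (1 / (n : ℝ)) :=
    Real.rpow_le_rpow (by positivity) (hle n) (by positivity)
  linarith [hc'.le, hc'.ge]

lemma svep_transfer {A : X →L[ℂ] X} (hA : HasSVEP A) {U : Set ℂ} (hU : IsOpen U)
    {f : ℂ → X} (hf : AnalyticOnNhd ℂ f U)
    (heig : ∀ l ∈ U, l ≠ 0 → A (f l) = l⁻¹ • f l) : ∀ l ∈ U, f l = 0 := by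
  have key : ∀ l ∈ U, l ≠ 0 → f l = 0 := by
    intro l hl hl0
    set V : Set ℂ := {(0 : ℂ)}ᶜ ∩ (fun z : ℂ => z⁻¹) ⁻¹' U with hV
    have hVopen : IsOpen V :=
      (continuousOn_inv₀).isOpen_inter_preimage isOpen_compl_singleton hU
    have hg : AnalyticOnNhd ℂ (fun μ : ℂ => f μ⁻¹) V := by
      intro μ hμ
      exact (hf μ⁻¹ hμ.2).comp (analyticAt_id.inv hμ.1)
    have hlV : l⁻¹ ∈ V := by
      refine ⟨inv_ne_zero hl0, ?_⟩
      simpa [inv_inv] using hl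
    have heqV : ∀ μ ∈ V, μ • (fun μ : ℂ => f μ⁻¹) μ - A ((fun μ : ℂ => f μ⁻¹) μ) = 0 := by
      intro μ hμ
      have hμ0 : μ ≠ 0 := hμ.1
      have := heig μ⁻¹ hμ.2 (inv_ne_zero hμ0)
      simp only [this, inv_inv, sub_self]
    have := hA l⁻¹ V hVopen hlV _ hg heqV l⁻¹ hlV
    simpa [inv_inv] using this
  intro l hl
  rcases eq_or_ne l 0 with rfl | hl0
  · have h1 : Tendsto f (𝓝[≠] (0 : ℂ)) (𝓝 (f 0)) :=
      ((hf 0 hl).continuousAt.continuousWithinAt)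
    have h2 : Tendsto f (𝓝[≠] (0 : ℂ)) (𝓝 0) := by
      refine tendsto_const_nhds.congr' ?_
      filter_upwards [self_mem_nhdsWithin,
        mem_nhdsWithin_of_mem_nhds (hU.mem_nhds hl)] with μ hμ1 hμ2
      exact (key μ hμ2 hμ1).symm
    exact tendsto_nhds_unique h1 h2
  · exact key l hl hl0

/-- `T` has the SVEP iff its generalized Drazin inverse `S` has the SVEP. -/
theorem svep_iff_svep_gdInverse (T S : X →L[ℂ] X) (h : IsGDInverse T S) :
    HasSVEP T ↔ HasSVEP S := by
  obtain ⟨hcomm, hsts, hq⟩ := h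
  have hST : ∀ x : X, S (T x) = T (S x) := fun x => by
    have := congrArg (fun A : X →L[ℂ] X => A x) hcomm
    simpa using this
  have hSTS : ∀ x : X, S (T (S x)) = S x := fun x => by
    have := congrArg (fun A : X →L[ℂ] X => A x) hsts
    simpa using this
  constructor
  · intro hT l0 U hU hl0 f hf heq
    refine svep_transfer hT hU hf ?_
    intro l hl hl0'
    have hSy : S (f l) = l • f l := by
      have := heq l hl; rw [sub_eq_zero] at this; exact this.symm
    have h1 : S (T (f l)) = f l := by
      have h2 : S (T (S (f l))) = S (f l) := hSTS (f l)
      rw [hSy, map_smul, map_smul] at h2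
      exact smul_right_injective X hl0' h2
    have h5 : T (S (f l)) = f l := by rw [← hST, h1]
    have h4 : f l = l • T (f l) := by
      calc f l = T (S (f l)) := h5.symm
        _ = T (l • f l) := by rw [hSy]
        _ = l • T (f l) := map_smul T l (f l)
    have h6 : T (f l) = l⁻¹ • (l • T (f l)) := (inv_smul_smul₀ hl0' _).symm
    rw [← h4] at h6
    exact h6
  · intro hS l0 U hU hl0 f hf heq
    refine svep_transfer hS hU hf ?_
    intro l hl hl0'
    have hTy : T (f l) = l • f l := by
      have := heq l hl; rw [sub_eq_zero] at this; exact this.symm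
    set y := f l with hy
    have hTh : T (y - T (S y)) = l • (y - T (S y)) := by
      have e1 : T (T (S y)) = l • T (S y) := by
        calc T (T (S y)) = T (S (T y)) := by rw [hST]
          _ = T (S (l • y)) := by rw [hTy]
          _ = l • T (S y) := by rw [map_smul, map_smul]
      rw [map_sub, hTy, e1, smul_sub]
    have hTSh : T (S (y - T (S y))) = 0 := by
      rw [map_sub, hSTS, sub_self, map_zero]
    have happ : (T * S * T - T) (y - T (S y))
        = T (S (T (y - T (S y)))) - T (y - T (S y)) := by
      simp [ContinuousLinearMap.sub_apply, ContinuousLinearMap.mul_apply]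
    have hQh : (T * S * T - T) (y - T (S y)) = (-l) • (y - T (S y)) := by
      rw [happ, hTh, map_smul, map_smul, hTSh, smul_zero, zero_sub, neg_smul]
    have hQn : ∀ n : ℕ, ((T * S * T - T) ^ n) (y - T (S y))
        = ((-l) ^ n) • (y - T (S y)) := by
      intro n
      induction n with
      | zero => simp
      | succ n ih =>
        rw [pow_succ, ContinuousLinearMap.mul_apply, hQh, map_smul, ih, smul_smul,
          ← pow_succ']
    have hnorm : ∀ n : ℕ, ‖l‖ ^ n * ‖y - T (S y)‖
        ≤ ‖(T * S * T - T) ^ n‖ * ‖y - T (S y)‖ := by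
      intro n
      have := ((T * S * T - T) ^ n).le_opNorm (y - T (S y))
      rwa [hQn n, norm_smul, norm_pow, norm_neg] at this
    have hh : y - T (S y) = 0 := quasinil_eigen hq (norm_pos_iff.mpr hl0') hnorm
    have hyP : y = T (S y) := by rwa [sub_eq_zero] at hh
    have h4 : T (S y) = l • S y := by rw [← hST, hTy, map_smul]
    have h5 : y = l • S y := hyP.trans h4
    have h6 : S y = l⁻¹ • (l • S y) := (inv_smul_smul₀ hl0' _).symm
    rw [← h5] at h6
    exact h6


end Paper
end

section
/- Let X be a complex Banach space, T a bounded linear operator on X with the SVEP, and S a generalized Drazin inverse of T (i.e., ST = TS, STS = S, and TST − T is quasinilpotent). Then for every x ∈ X, σ_S(x) \ {0} = {1/λ : λ ∈ σ_T(x) \ {0}}, where σ_T(x) denotes the local spectrum of T at x. -/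
open Filter Topology Set

namespace Paper

variable {Y : Type*} [NormedAddCommGroup Y] [NormedSpace ℂ Y]

variable {X : Type*} [NormedAddCommGroup X] [NormedSpace ℂ X] [CompleteSpace X]

section Helpers
open scoped ENNReal NNReal

lemma quasi_unit (Q : X →L[ℂ] X)
    (hQ : Tendsto (fun n : ℕ => ‖Q ^ n‖ ^ (1 / (n : ℝ))) atTop (nhds (0 : ℝ)))
    {μ : ℂ} (hμ : μ ≠ 0) : IsUnit (algebraMap ℂ (X →L[ℂ] X) μ + Q) := by
  have hrad : spectralRadius ℂ Q = 0 := by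
    refine le_antisymm ?_ zero_le
    refine le_trans (spectrum.spectralRadius_le_liminf_pow_nnnorm_pow_one_div ℂ Q) ?_
    have h0 : Tendsto (fun n : ℕ => (‖Q ^ n‖₊ : ℝ≥0∞) ^ (1 / (n : ℝ))) atTop (nhds 0) := by
      have := ENNReal.tendsto_ofReal hQ
      rw [ENNReal.ofReal_zero] at this
      refine this.congr fun n => ?_
      rw [← enorm_eq_nnnorm, ← ofReal_norm,
        ENNReal.ofReal_rpow_of_nonneg (norm_nonneg _) (one_div_nonneg.mpr (Nat.cast_nonneg n))]
    rw [h0.liminf_eq]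
  have h1 : -μ ∈ resolventSet ℂ Q := by
    apply spectrum.mem_resolventSet_of_spectralRadius_lt
    rw [hrad]
    simpa using hμ
  rw [spectrum.mem_resolventSet_iff] at h1
  have heq : algebraMap ℂ (X →L[ℂ] X) (-μ) - Q = -(algebraMap ℂ (X →L[ℂ] X) μ + Q) := by
    simp [map_neg]; abel
  rw [heq] at h1
  simpa using h1.neg


-- direction 1
lemma dir1 (T S : X →L[ℂ] X) (hc : S * T = T * S) (h2 : S * T * S = S)
    (x : X) {μ : ℂ} (hμ : μ ≠ 0) (hm : μ ∈ localResolvent T x) :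
    μ⁻¹ ∈ localResolvent S x := by
  obtain ⟨U, ⟨hUo, f, hf, heq⟩, hμU⟩ := hm
  obtain ⟨P, hP⟩ : ∃ P : X →L[ℂ] X, P = T * S := ⟨_, rfl⟩
  have hPT : P * T = T * P := by rw [hP, mul_assoc, ← hc, ← mul_assoc]
  have hSP : S * P = S := by rw [hP, ← mul_assoc, h2]
  have hSTP : S * (T * P) = P := by
    have ha : S * (T * (T * S)) = (S * T) * (T * S) := by noncomm_ring
    rw [hP, ha, hc, mul_assoc, ← mul_assoc S T S, h2]
  refine ⟨{0}ᶜ ∩ (fun l : ℂ => l⁻¹) ⁻¹' U, ⟨?_, fun l => l⁻¹ • (x - P x - T (P (f l⁻¹))), ?_, ?_⟩, ?_⟩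
  · exact continuousOn_inv₀.isOpen_inter_preimage isOpen_compl_singleton hUo
  · rintro l ⟨hl0, hlU⟩
    have hl0' : l ≠ 0 := hl0
    have h1 : AnalyticAt ℂ (fun l : ℂ => l⁻¹) l := analyticAt_inv hl0'
    have h2' : AnalyticAt ℂ (fun l : ℂ => f l⁻¹) l := (hf _ hlU).comp h1
    have h3 : AnalyticAt ℂ (fun l : ℂ => x - P x - T (P (f l⁻¹))) l := by
      exact analyticAt_const.sub (((T.comp P).analyticAt _).comp h2')
    exact h1.smul h3
  · rintro l ⟨hl0, hlU⟩
    have hl0' : (l : ℂ) ≠ 0 := hl0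
    set y := f l⁻¹ with hy
    have hx : l⁻¹ • y - T y = x := heq _ hlU
    have hPx : l⁻¹ • P y - T (P y) = P x := by
      have := congrArg P hx
      rw [map_sub, map_smul] at this
      rw [← this, ← ContinuousLinearMap.mul_apply P T, hPT, ContinuousLinearMap.mul_apply]
    have hS1 : S (P x) = S x := by
      rw [← ContinuousLinearMap.mul_apply S P, hSP]
    have hS2 : S (T (P y)) = P y := by
      rw [← ContinuousLinearMap.mul_apply T P, ← ContinuousLinearMap.mul_apply S (T*P), hSTP]
    rw [smul_smul, mul_inv_cancel₀ hl0', one_smul, map_smul, map_sub, map_sub, hS1, hS2]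
    rw [smul_sub, smul_sub]
    rw [← hPx]
    push_cast
    module
  · exact ⟨inv_ne_zero hμ, by simpa using hμU⟩


-- direction 2
lemma dir2 (T S : X →L[ℂ] X) (hc : S * T = T * S) (h2 : S * T * S = S)
    (hq : Tendsto (fun n : ℕ => ‖(T * S * T - T) ^ n‖ ^ (1 / (n : ℝ))) atTop (nhds (0 : ℝ)))
    (x : X) {ν : ℂ} (hν : ν ≠ 0) (hm : ν ∈ localResolvent S x) :
    ν⁻¹ ∈ localResolvent T x := by
  obtain ⟨U, ⟨hUo, g, hg, heq⟩, hνU⟩ := hm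
  obtain ⟨P, hP⟩ : ∃ P : X →L[ℂ] X, P = T * S := ⟨_, rfl⟩
  obtain ⟨Q, hQdef⟩ : ∃ Q : X →L[ℂ] X, Q = T * S * T - T := ⟨_, rfl⟩
  have hPT : P * T = T * P := by rw [hP, mul_assoc, ← hc, ← mul_assoc]
  have hPP : P * P = P := by
    rw [hP, mul_assoc, ← mul_assoc S T S, h2]
  have hSP : S * P = S := by rw [hP, ← mul_assoc, h2]
  have hPS : P * S = S := by rw [hP, ← hc, h2]
  have hQ_eq : Q = T * P - T := by rw [hQdef, hP, mul_assoc, hc]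
  have hQP : Q * P = 0 := by
    rw [hQ_eq, sub_mul, mul_assoc, hPP, sub_self]
  have hPQ : P * Q = 0 := by
    rw [hQ_eq, mul_sub, ← mul_assoc, hPT, mul_assoc, hPP]
    exact sub_self _
  have hq' : Tendsto (fun n : ℕ => ‖Q ^ n‖ ^ (1 / (n : ℝ))) atTop (nhds (0 : ℝ)) := by
    rw [hQdef]; exact hq
  -- units
  have hu : ∀ μ : ℂ, μ ≠ 0 → IsUnit (algebraMap ℂ (X →L[ℂ] X) μ + Q) :=
    fun μ hμ => quasi_unit Q hq' hμ
  -- the resolvent-type function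
  set Rv : ℂ → X := fun μ => Ring.inverse (algebraMap ℂ (X →L[ℂ] X) μ + Q) (x - P x) with hRv
  -- key pointwise identity
  have hA : ∀ μ : ℂ, μ ≠ 0 → μ • Rv μ - T (Rv μ) = x - P x := by
    intro μ hμ
    obtain ⟨u, hu'⟩ := hu μ hμ
    set A : X →L[ℂ] X := algebraMap ℂ (X →L[ℂ] X) μ + Q with hA'
    have hRinv : Ring.inverse A = (↑u⁻¹ : X →L[ℂ] X) := by
      rw [← hu', Ring.inverse_unit]
    have hcomm : Commute P A := by
      rw [hA']
      refine Commute.add_right (Algebra.commutes μ P).symm ?_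
      rw [Commute, SemiconjBy, hPQ, hQP]
    have hcommInv : Commute P (Ring.inverse A) := by
      rw [hRinv]
      exact (hu' ▸ hcomm).units_inv_right
    have keymul : (algebraMap ℂ (X →L[ℂ] X) μ - T) * (1 - P) = A * (1 - P) := by
      have hdiff : (algebraMap ℂ (X →L[ℂ] X) μ - T) - A = -(T * P) := by
        rw [hA', hQ_eq]; abel
      have hz : ((algebraMap ℂ (X →L[ℂ] X) μ - T) - A) * (1 - P) = 0 := by
        rw [hdiff, neg_mul, mul_sub, mul_one, mul_assoc, hPP, sub_self, neg_zero]
      rw [sub_mul] at hz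
      exact sub_eq_zero.mp hz
    have h1P : (1 - P) * Ring.inverse A = Ring.inverse A * (1 - P) :=
      ((Commute.one_left (Ring.inverse A)).sub_left hcommInv).eq
    have keyop : (algebraMap ℂ (X →L[ℂ] X) μ - T) * (Ring.inverse A * (1 - P)) = 1 - P := by
      calc (algebraMap ℂ (X →L[ℂ] X) μ - T) * (Ring.inverse A * (1 - P))
          = (algebraMap ℂ (X →L[ℂ] X) μ - T) * ((1 - P) * Ring.inverse A) := by rw [h1P]
        _ = ((algebraMap ℂ (X →L[ℂ] X) μ - T) * (1 - P)) * Ring.inverse A := by rw [mul_assoc]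
        _ = (A * (1 - P)) * Ring.inverse A := by rw [keymul]
        _ = A * (Ring.inverse A * (1 - P)) := by rw [mul_assoc, h1P]
        _ = (A * Ring.inverse A) * (1 - P) := by rw [mul_assoc]
        _ = 1 - P := by rw [Ring.mul_inverse_cancel A ⟨u, hu'⟩, one_mul]
    have := congrArg (fun (B : X →L[ℂ] X) => B x) keyop
    simp only [ContinuousLinearMap.mul_apply, ContinuousLinearMap.sub_apply,
      ContinuousLinearMap.one_apply, Algebra.algebraMap_eq_smul_one,
      ContinuousLinearMap.smul_apply] at this
    simpa [hRv, hA', Algebra.algebraMap_eq_smul_one] using this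
  -- analyticity of Rv away from 0
  have hRvAnalytic : ∀ μ : ℂ, μ ≠ 0 → AnalyticAt ℂ Rv μ := by
    intro μ hμ
    have haff : AnalyticAt ℂ (fun μ : ℂ => algebraMap ℂ (X →L[ℂ] X) μ + Q) μ := by
      simp only [Algebra.algebraMap_eq_smul_one]
      exact ((analyticAt_id).smul analyticAt_const).add analyticAt_const
    have hinv : AnalyticAt ℂ (Ring.inverse : (X →L[ℂ] X) → (X →L[ℂ] X))
        (algebraMap ℂ (X →L[ℂ] X) μ + Q) := by
      obtain ⟨u, hu'⟩ := hu μ hμ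
      rw [← hu']
      exact analyticAt_inverse u
    have hcomp := AnalyticAt.comp (𝕜 := ℂ)
      (g := (Ring.inverse : (X →L[ℂ] X) → (X →L[ℂ] X)))
      (f := fun ν : ℂ => algebraMap ℂ (X →L[ℂ] X) ν + Q) hinv haff
    exact (((ContinuousLinearMap.apply ℂ X (x - P x)).analyticAt _).comp hcomp : _)
  refine ⟨{0}ᶜ ∩ (fun l : ℂ => l⁻¹) ⁻¹' U, ⟨?_, fun μ => Rv μ - μ⁻¹ • S (P (g μ⁻¹)), ?_, ?_⟩, ?_⟩
  · exact continuousOn_inv₀.isOpen_inter_preimage isOpen_compl_singleton hUo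
  · rintro μ ⟨hμ0, hμU⟩
    have hμ0' : (μ : ℂ) ≠ 0 := hμ0
    have h1 : AnalyticAt ℂ (fun l : ℂ => l⁻¹) μ := analyticAt_inv hμ0'
    have h2' : AnalyticAt ℂ (fun l : ℂ => g l⁻¹) μ := (hg _ hμU).comp h1
    have h3 : AnalyticAt ℂ (fun l : ℂ => S (P (g l⁻¹))) μ := ((S.comp P).analyticAt _).comp h2'
    exact (hRvAnalytic μ hμ0').sub (h1.smul h3)
  · rintro μ ⟨hμ0, hμU⟩
    have hμ0' : (μ : ℂ) ≠ 0 := hμ0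
    set z := g μ⁻¹ with hzdef
    have hx : μ⁻¹ • z - S z = x := heq _ hμU
    have hB : μ⁻¹ • P z = P x + S z := by
      have h := congrArg P hx
      rw [map_sub, map_smul] at h
      have hPSz : P (S z) = S z := by rw [← ContinuousLinearMap.mul_apply, hPS]
      rw [hPSz] at h
      rw [← h]; abel
    have hSPz : S (P z) = S z := by rw [← ContinuousLinearMap.mul_apply, hSP]
    have hTSz : T (S z) = P z := by rw [← ContinuousLinearMap.mul_apply, ← hP]
    have hAμ := hA μ hμ0'
    rw [sub_eq_iff_eq_add] at hAμ
    show μ • (Rv μ - μ⁻¹ • S (P z)) - T (Rv μ - μ⁻¹ • S (P z)) = x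
    rw [hSPz, smul_sub, map_sub, map_smul, hTSz, hAμ, smul_smul, mul_inv_cancel₀ hμ0',
      one_smul, hB]
    abel
  · exact ⟨inv_ne_zero hν, by simpa using hνU⟩


end Helpers

/-- if `T` has the SVEP and `S` is a generalized Drazin inverse of `T`,
then for all `x`, `σ_S(x) \ {0} = {1/λ : λ ∈ σ_T(x) \ {0}}`. -/
theorem localSpectrum_gdInverse (T S : X →L[ℂ] X) (hT : HasSVEP T)
    (h : IsGDInverse T S) (x : X) :
    localSpectrum S x \ {0} = (fun l : ℂ => 1 / l) '' (localSpectrum T x \ {0}) := by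
  obtain ⟨hc, h2, hq⟩ := h
  ext l
  simp only [localSpectrum, Set.mem_diff, Set.mem_compl_iff, Set.mem_image,
    Set.mem_singleton_iff]
  constructor
  · rintro ⟨hl, hl0⟩
    refine ⟨l⁻¹, ⟨fun hres => hl ?_, inv_ne_zero hl0⟩, by simp [one_div]⟩
    simpa using dir1 T S hc h2 x (inv_ne_zero hl0) hres
  · rintro ⟨m, ⟨hm, hm0⟩, rfl⟩
    refine ⟨fun hres => hm ?_, by simp [one_div, hm0]⟩
    rw [one_div] at hres
    simpa using dir2 T S hc h2 hq x (inv_ne_zero hm0) hres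

end Paper
end
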